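/- Let ω be a k-subset of {1,...,n} with 2k ≤ n and threshold h > 0 (i.e. h = max{i : |ω ∩ {1,...,2i−1}| = i} > 0). Then there is a permutation σ of {1,...,n} stabilizing ω (setwise) such that the tableau t^ω σ is (k−h)-standard, i.e. its first k−h columns are strictly increasing downward. -/

import Mathlib

/-- The density `d^ω_i = |ω ∩ {1,...,2i-1}|`. -/
def dens (ω : Finset ℕ) (i : ℕ) : ℕ := (ω ∩ Finset.Icc 1 (2 * i - 1)).card

/-- The threshold of `ω`: `max({0} ∪ {i ∈ {1,...,m} : d^ω_i = i})`, `m = ⌊n/2⌋+1`. -/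
def threshold (n : ℕ) (ω : Finset ℕ) : ℕ :=
  ((Finset.Icc 1 (n / 2 + 1)).filter fun i => dens ω i = i).sup id

lemma dens_mono (ω : Finset ℕ) : Monotone (dens ω) := by
  intro i j hij
  exact Finset.card_le_card (Finset.inter_subset_inter le_rfl
    (Finset.Icc_subset_Icc le_rfl (by omega)))

lemma dens_le_card (ω : Finset ℕ) (i : ℕ) : dens ω i ≤ ω.card :=
  Finset.card_le_card Finset.inter_subset_left

/-- Discrete IVT: if the density at `i₀` is at least `i₀`, then density equals the
index at some `i' ≥ i₀`. -/
lemma exists_dens_eq (ω : Finset ℕ) {i₀ : ℕ} (hge : i₀ ≤ dens ω i₀) :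
    ∃ i', i₀ ≤ i' ∧ i' ≤ ω.card ∧ dens ω i' = i' := by
  classical
  set S := (Finset.Icc i₀ ω.card).filter (fun t => t ≤ dens ω t) with hS
  have hi₀S : i₀ ∈ S := by
    simp only [hS, Finset.mem_filter, Finset.mem_Icc]
    exact ⟨⟨le_rfl, hge.trans (dens_le_card ω i₀)⟩, hge⟩
  have hne : S.Nonempty := ⟨i₀, hi₀S⟩
  set i' := S.max' hne with hi'
  have hi'S : i' ∈ S := S.max'_mem hne
  simp only [hS, Finset.mem_filter, Finset.mem_Icc] at hi'S
  refine ⟨i', hi'S.1.1, hi'S.1.2, ?_⟩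
  have h2 : dens ω (i' + 1) ≤ i' := by
    by_contra hc
    push_neg at hc
    have hmem : i' + 1 ∈ S := by
      simp only [hS, Finset.mem_filter, Finset.mem_Icc]
      exact ⟨⟨by omega, hc.trans_le (dens_le_card ω _)⟩, hc⟩
    have := S.le_max' _ hmem
    omega
  have h3 : dens ω i' ≤ dens ω (i' + 1) := dens_mono ω (by omega)
  omega

/-- Elements of `S` that are `≤` the `p`-th element of the sorted list are exactly
the first `p+1` elements. -/
lemma card_filter_le_sort (S : Finset ℕ) (p : ℕ) (hp : p < (S.sort (· ≤ ·)).length) :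
    (S.filter (fun x => x ≤ (S.sort (· ≤ ·))[p])).card = p + 1 := by
  classical
  have hnd : (S.sort (· ≤ ·)).Nodup := S.sort_nodup _
  have hsorted : (S.sort (· ≤ ·)).Pairwise (· < ·) := S.sortedLT_sort.pairwise
  have heq : S.filter (fun x => x ≤ (S.sort (· ≤ ·))[p])
      = ((S.sort (· ≤ ·)).take (p + 1)).toFinset := by
    ext x
    simp only [Finset.mem_filter, List.mem_toFinset]
    constructor
    · rintro ⟨hxS, hxle⟩
      have hxL : x ∈ S.sort (· ≤ ·) := (Finset.mem_sort _).2 hxS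
      obtain ⟨q, hq, rfl⟩ := List.getElem_of_mem hxL
      have hqp : q < p + 1 := by
        by_contra hq'
        push_neg at hq'
        have : (S.sort (· ≤ ·))[p] < (S.sort (· ≤ ·))[q] := by
          have := hsorted.rel_get_of_lt (a := ⟨p, hp⟩) (b := ⟨q, hq⟩) (by simp; omega)
          simpa using this
        omega
      have hqt : q < ((S.sort (· ≤ ·)).take (p + 1)).length := by
        rw [List.length_take]; omega
      have : ((S.sort (· ≤ ·)).take (p + 1))[q] = (S.sort (· ≤ ·))[q] :=
        List.getElem_take
      exact this ▸ List.getElem_mem hqt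
    · intro hx
      obtain ⟨q, hq, rfl⟩ := List.getElem_of_mem hx
      have hq' : q < (S.sort (· ≤ ·)).length := by
        rw [List.length_take] at hq; omega
      have hqp : q < p + 1 := by rw [List.length_take] at hq; omega
      rw [List.getElem_take (xs := S.sort (· ≤ ·))]
      constructor
      · exact (Finset.mem_sort _).1 (List.getElem_mem hq')
      · rcases Nat.lt_or_ge q p with h | h
        · have := hsorted.rel_get_of_lt (a := ⟨q, hq'⟩) (b := ⟨p, hp⟩) (by simp; omega)
          simpa using this.le
        · have : q = p := by omega
          subst this; exact le_rfl
  rw [heq, List.toFinset_card_of_nodup ((List.take_sublist _ _).nodup hnd),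
    List.length_take]
  omega

/-- Elements of `S` strictly below the `p`-th element of the sorted list number at
most `p`. -/
lemma card_filter_lt_sort (S : Finset ℕ) (p : ℕ) (hp : p < (S.sort (· ≤ ·)).length) :
    (S.filter (fun x => x < (S.sort (· ≤ ·))[p])).card ≤ p := by
  classical
  have hsorted : (S.sort (· ≤ ·)).Pairwise (· < ·) := S.sortedLT_sort.pairwise
  have hsub : S.filter (fun x => x < (S.sort (· ≤ ·))[p])
      ⊆ ((S.sort (· ≤ ·)).take p).toFinset := by
    intro x hx
    simp only [Finset.mem_filter] at hx
    obtain ⟨hxS, hxlt⟩ := hx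
    have hxL : x ∈ S.sort (· ≤ ·) := (Finset.mem_sort _).2 hxS
    obtain ⟨q, hq, rfl⟩ := List.getElem_of_mem hxL
    have hqp : q < p := by
      by_contra hq'
      push_neg at hq'
      rcases Nat.lt_or_ge p q with h | h
      · have := hsorted.rel_get_of_lt (a := ⟨p, hp⟩) (b := ⟨q, hq⟩) (by simp; omega)
        simp only [List.get_eq_getElem] at this
        omega
      · have : q = p := by omega
        subst this; omega
    have hqt : q < ((S.sort (· ≤ ·)).take p).length := by
      rw [List.length_take]; omega
    have : ((S.sort (· ≤ ·)).take p)[q] = (S.sort (· ≤ ·))[q] := List.getElem_take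
    exact List.mem_toFinset.2 (this ▸ List.getElem_mem hqt)
  calc (S.filter (fun x => x < (S.sort (· ≤ ·))[p])).card
      ≤ ((S.sort (· ≤ ·)).take p).toFinset.card := Finset.card_le_card hsub
    _ ≤ ((S.sort (· ≤ ·)).take p).length := List.toFinset_card_le _
    _ ≤ p := by rw [List.length_take]; omega

/-- if `ω` is a `k`-subset of `{1,...,n}` with `2k ≤ n` and threshold
`h > 0`, then there is a permutation `σ` of `{1,...,n}` stabilizing `ω` setwise such
that the tableau `t^ω σ` is `(k−h)`-standard: its first `k−h` columns are strictly
increasing downward, i.e. `σ(t^ω_{1,j}) < σ(t^ω_{2,j})` for all `j ≤ k−h`. -/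
theorem exists_perm_partial_standard (n k : ℕ) (h2k : 2 * k ≤ n) (ω : Finset ℕ)
    (hω : ω ⊆ Finset.Icc 1 n) (hcard : ω.card = k) (hpos : 0 < threshold n ω) :
    ∃ σ : Equiv.Perm ℕ, (∀ x ∉ Finset.Icc 1 n, σ x = x) ∧ ω.image σ = ω ∧
      ∀ j < k - threshold n ω,
        σ (((Finset.Icc 1 n \ ω).sort (· ≤ ·)).getD j 0)
          < σ ((ω.sort (· ≤ ·)).getD j 0) := by
  classical
  set H := threshold n ω with hHdef
  -- H is attained
  have hHmem : H ∈ (Finset.Icc 1 (n / 2 + 1)).filter fun i => dens ω i = i := by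
    have hne : ((Finset.Icc 1 (n / 2 + 1)).filter fun i => dens ω i = i).Nonempty := by
      by_contra hc
      rw [Finset.not_nonempty_iff_eq_empty] at hc
      rw [hHdef, threshold, hc] at hpos
      simp at hpos
    obtain ⟨b, hb, he⟩ := Finset.exists_mem_eq_sup _ hne id
    have : H = b := by rw [hHdef, threshold, he]; rfl
    rwa [this]
  simp only [Finset.mem_filter, Finset.mem_Icc] at hHmem
  obtain ⟨⟨hH1, _⟩, hHd⟩ := hHmem
  have hHk : H ≤ k := by
    have := dens_le_card ω H
    rw [hHd, hcard] at this; exact this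
  set L := ω.sort (· ≤ ·) with hL
  have hLlen : L.length = k := by rw [hL, Finset.length_sort, hcard]
  have hLnd : L.Nodup := ω.sort_nodup _
  set σ := L.formPerm ^ H with hσ
  -- fixedness off ω
  have hfix : ∀ x ∉ ω, σ x = x := by
    intro x hx
    have hxL : x ∉ L := fun h => hx ((Finset.mem_sort _).1 h)
    have hbase := List.formPerm_apply_of_notMem hxL
    clear_value σ
    subst hσ
    induction H with
    | zero => simp
    | succ m ih => rw [pow_succ, Equiv.Perm.mul_apply, hbase, ih]
  refine ⟨σ, fun x hx => hfix x (fun h => hx (hω h)), ?_, ?_⟩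
  · -- image
    apply Finset.eq_of_subset_of_card_le
    · intro y hy
      simp only [Finset.mem_image] at hy
      obtain ⟨x, hx, rfl⟩ := hy
      have hxL : x ∈ L := (Finset.mem_sort _).2 hx
      have : σ x ∈ L := by
        clear_value σ
        subst hσ
        induction H with
        | zero => simpa
        | succ m ih =>
            rw [pow_succ', Equiv.Perm.mul_apply]
            exact List.formPerm_apply_mem_of_mem ih
      exact (Finset.mem_sort (α := ℕ) (· ≤ ·)).1 this
    · rw [Finset.card_image_of_injective _ σ.injective]
  · -- the inequalities
    intro j hj
    have hjH : j + H < k := by omega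
    set C := Finset.Icc 1 n \ ω with hC
    have hCcard : C.card = n - k := by
      rw [hC, Finset.card_sdiff_of_subset hω, Nat.card_Icc, hcard]; omega
    have hClen : (C.sort (· ≤ ·)).length = n - k := by rw [Finset.length_sort, hCcard]
    have hjC : j < (C.sort (· ≤ ·)).length := by omega
    have hjL : j < L.length := by omega
    have hjHL : j + H < L.length := by omega
    rw [List.getD_eq_getElem _ _ hjC, List.getD_eq_getElem _ _ hjL]
    -- σ fixes the complement element
    have hAmem : (C.sort (· ≤ ·))[j] ∈ C := (Finset.mem_sort _).1 (List.getElem_mem hjC)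
    have hAnot : (C.sort (· ≤ ·))[j] ∉ ω := (Finset.mem_sdiff.mp hAmem).2
    rw [hfix _ hAnot]
    -- σ shifts ω's sorted list by H
    have hσB : σ L[j] = L[j + H] := by
      have hmod : (j + H) % L.length = j + H := by
        rw [hLlen]; exact Nat.mod_eq_of_lt hjH
      rw [hσ, List.formPerm_pow_apply_getElem _ hLnd]
      simp only [hmod]
    rw [hσB]
    -- main combinatorial inequality
    by_contra hle
    push_neg at hle
    set m := L[j + H] with hm
    have hmω : m ∈ ω := (Finset.mem_sort (α := ℕ) (· ≤ ·)).1 (List.getElem_mem hjHL)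
    have hmlt : m < (C.sort (· ≤ ·))[j] := by
      rcases lt_or_eq_of_le hle with h | h
      · exact h
      · exact absurd (h ▸ hmω) hAnot
    have hm1 : 1 ≤ m := (Finset.mem_Icc.1 (hω hmω)).1
    have hmn : m ≤ n := (Finset.mem_Icc.1 (hω hmω)).2
    have hf1 : (ω.filter (fun x => x ≤ m)).card = j + H + 1 :=
      card_filter_le_sort ω (j + H) (hL ▸ hjHL)
    have hf2 : (C.filter (fun x => x < (C.sort (· ≤ ·))[j])).card ≤ j :=
      card_filter_lt_sort C j hjC
    -- m ≥ 2H
    have hg1 : 2 * H ≤ m := by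
      by_contra hc
      push_neg at hc
      have hsub : ω.filter (fun x => x ≤ m) ⊆ ω ∩ Finset.Icc 1 (2 * H - 1) := by
        intro x hx
        simp only [Finset.mem_filter] at hx
        have hx1 := (Finset.mem_Icc.1 (hω hx.1)).1
        exact Finset.mem_inter.2 ⟨hx.1, Finset.mem_Icc.2 ⟨hx1, by omega⟩⟩
      have := Finset.card_le_card hsub
      rw [hf1] at this
      have : j + H + 1 ≤ dens ω H := this
      omega
    -- m ≤ 2j + H + 1
    have hg2 : m ≤ 2 * j + H + 1 := by
      have hsub : Finset.Icc 1 m ⊆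
          ω.filter (fun x => x ≤ m) ∪ C.filter (fun x => x < (C.sort (· ≤ ·))[j]) := by
        intro x hx
        rw [Finset.mem_Icc] at hx
        have hxn : x ∈ Finset.Icc 1 n := Finset.mem_Icc.2 ⟨hx.1, by omega⟩
        by_cases hxw : x ∈ ω
        · exact Finset.mem_union_left _ (Finset.mem_filter.2 ⟨hxw, hx.2⟩)
        · refine Finset.mem_union_right _ (Finset.mem_filter.2 ⟨?_, by omega⟩)
          rw [hC, Finset.mem_sdiff]; exact ⟨hxn, hxw⟩
      have hcardm := Finset.card_le_card hsub
      rw [Nat.card_Icc] at hcardm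
      have := (Finset.card_union_le _ _).trans (by rw [hf1]; omega :
        (ω.filter (fun x => x ≤ m)).card
          + (C.filter (fun x => x < (C.sort (· ≤ ·))[j])).card ≤ j + H + 1 + j)
      omega
    -- density at i₀ := m/2 + 1 is at least i₀
    set i₀ := m / 2 + 1 with hi₀
    have hg3 : i₀ ≤ dens ω i₀ := by
      have hsub : ω.filter (fun x => x ≤ m) ⊆ ω ∩ Finset.Icc 1 (2 * i₀ - 1) := by
        intro x hx
        simp only [Finset.mem_filter] at hx
        have hx1 := (Finset.mem_Icc.1 (hω hx.1)).1
        exact Finset.mem_inter.2 ⟨hx.1, Finset.mem_Icc.2 ⟨hx1, by omega⟩⟩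
      have := Finset.card_le_card hsub
      rw [hf1] at this
      have hd : j + H + 1 ≤ dens ω i₀ := this
      omega
    obtain ⟨i', hi'1, hi'2, hi'3⟩ := exists_dens_eq ω hg3
    have hi'mem : i' ∈ (Finset.Icc 1 (n / 2 + 1)).filter fun i => dens ω i = i := by
      simp only [Finset.mem_filter, Finset.mem_Icc]
      rw [hcard] at hi'2
      exact ⟨⟨by omega, by omega⟩, hi'3⟩
    have hle' : i' ≤ H := by
      have := Finset.le_sup (f := id) hi'mem
      rw [← threshold, ← hHdef] at this
      exact this
    omega
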